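/- arXiv:2105.06246 — 3 statements merged into one kernel-verified Lean document; each statement's English description precedes it below -/
import Mathlib

section
/- Let n be a positive natural number, let Z be a measurable space, let π be a probability measure on Z (the prior), let μ : Z → ℝⁿ be measurable, and let σ > 0. Define the Gaussian likelihood density f(x,z) = (2πσ²)^{-n/2} · exp(-‖x - μ(z)‖²/(2σ²)) for x ∈ ℝⁿ (Euclidean norm), and the marginal density p(x) = ∫ f(x,z) dπ(z). Then for every x ∈ ℝⁿ we have 0 < p(x), the function z ↦ ‖μ(z)‖ · f(x,z) is π-integrable, the function x ↦ log p(x) is differentiable at every point, and its gradient satisfies ∇ log p(x) = σ^{-2} · ( (∫ μ(z) · f(x,z) dπ(z)) / p(x) − x ). (Proposition 1: the gradient of the VAE log-marginal density is proportional to the average posterior reconstruction minus x.) -/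
open MeasureTheory

lemma aux_mul_exp_le {σ s : ℝ} (hσ : 0 < σ) (hs : 0 ≤ s) :
    s * Real.exp (-s ^ 2 / (2 * σ ^ 2)) ≤ σ := by
  set t : ℝ := s ^ 2 / (2 * σ ^ 2) with ht
  have ht0 : 0 ≤ t := by positivity
  have h1 : Real.exp (-s ^ 2 / (2 * σ ^ 2)) ≤ (1 + t)⁻¹ := by
    rw [neg_div, ← ht, Real.exp_neg]
    exact inv_anti₀ (by linarith) (by linarith [Real.add_one_le_exp t])
  have h2 : s * (1 + t)⁻¹ ≤ σ := by
    rw [← div_eq_mul_inv, div_le_iff₀ (by linarith)]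
    have hexp : σ * (1 + t) = σ + s ^ 2 / (2 * σ) := by rw [ht]; field_simp
    rw [hexp, ← sub_nonneg]
    have : σ + s ^ 2 / (2 * σ) - s = (σ ^ 2 + (σ - s) ^ 2) / (2 * σ) := by field_simp; ring
    rw [this]; positivity
  calc s * Real.exp (-s ^ 2 / (2 * σ ^ 2)) ≤ s * (1 + t)⁻¹ :=
        mul_le_mul_of_nonneg_left h1 hs
    _ ≤ σ := h2


set_option maxHeartbeats 1000000 in
set_option synthInstance.maxHeartbeats 200000 in
/-- **Proposition 1.** For a VAE with prior `π` on a latent space `Z`, measurable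
decoder mean `μ : Z → ℝⁿ` and isotropic Gaussian likelihood
`f(x,z) = (2πσ²)^{-n/2} exp(-‖x-μ(z)‖²/(2σ²))`, the marginal density
`p(x) = ∫ f(x,z) dπ(z)` is positive, `z ↦ ‖μ(z)‖ f(x,z)` is integrable,
`log p` is differentiable, and `∇ log p(x) = σ⁻² (E_{p(z|x)}[μ(z)] − x)`. -/
theorem vae_gradient_log_marginal
    (n : ℕ) (hn : 0 < n) {Z : Type*} [MeasurableSpace Z]
    (π : Measure Z) [IsProbabilityMeasure π]
    (μ : Z → EuclideanSpace ℝ (Fin n)) (hμ : Measurable μ)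
    (σ : ℝ) (hσ : 0 < σ)
    (f : EuclideanSpace ℝ (Fin n) → Z → ℝ)
    (hf : ∀ x z, f x z =
      (2 * Real.pi * σ ^ 2) ^ (-(n : ℝ) / 2) *
        Real.exp (-‖x - μ z‖ ^ 2 / (2 * σ ^ 2)))
    (p : EuclideanSpace ℝ (Fin n) → ℝ)
    (hp : ∀ x, p x = ∫ z, f x z ∂π) :
    ∀ x : EuclideanSpace ℝ (Fin n),
      0 < p x ∧
      Integrable (fun z => ‖μ z‖ * f x z) π ∧
      DifferentiableAt ℝ (fun y => Real.log (p y)) x ∧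
      gradient (fun y => Real.log (p y)) x =
        (σ ^ 2)⁻¹ • ((p x)⁻¹ • (∫ z, f x z • μ z ∂π) - x) := by
  intro x
  set C : ℝ := (2 * Real.pi * σ ^ 2) ^ (-(n : ℝ) / 2) with hC
  have hC0 : 0 < C := Real.rpow_pos_of_pos (by positivity) _
  have fpos : ∀ (y : EuclideanSpace ℝ (Fin n)) z, 0 < f y z := by
    intro y z; rw [hf]; positivity
  have fle : ∀ (y : EuclideanSpace ℝ (Fin n)) z, f y z ≤ C := by
    intro y z; rw [hf]
    have h1 : Real.exp (-‖y - μ z‖ ^ 2 / (2 * σ ^ 2)) ≤ 1 := by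
      apply Real.exp_le_one_iff.2
      have : 0 ≤ ‖y - μ z‖ ^ 2 / (2 * σ ^ 2) := by positivity
      linarith [neg_div (2 * σ ^ 2) (‖y - μ z‖ ^ 2)]
    nlinarith
  have keybd : ∀ (y : EuclideanSpace ℝ (Fin n)) z, ‖y - μ z‖ * f y z ≤ C * σ := by
    intro y z; rw [hf]
    have := aux_mul_exp_le (s := ‖y - μ z‖) hσ (norm_nonneg _)
    nlinarith [Real.exp_pos (-‖y - μ z‖ ^ 2 / (2 * σ ^ 2)), norm_nonneg (y - μ z)]
  have hfm : ∀ y : EuclideanSpace ℝ (Fin n), Measurable (fun z => f y z) := by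
    intro y
    have : (fun z => f y z) = fun z =>
        C * Real.exp (-‖y - μ z‖ ^ 2 / (2 * σ ^ 2)) := by
      funext z; rw [hf]
    rw [this]
    exact measurable_const.mul
      (Real.measurable_exp.comp
        ((((measurable_const.sub hμ).norm.pow measurable_const).neg).div_const _))
  have hfi : ∀ y : EuclideanSpace ℝ (Fin n), Integrable (fun z => f y z) π := by
    intro y
    refine (integrable_const C).mono' (hfm y).aestronglyMeasurable (ae_of_all _ fun z => ?_)
    rw [Real.norm_eq_abs, abs_of_pos (fpos y z)]; exact fle y z
  have hppos : ∀ y : EuclideanSpace ℝ (Fin n), 0 < p y := by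
    intro y
    rw [hp]
    refine (integral_pos_iff_support_of_nonneg_ae
      (ae_of_all _ fun z => (fpos y z).le) (hfi y)).2 ?_
    have hsupp : (Function.support fun z => f y z) = Set.univ :=
      Set.eq_univ_of_forall fun z => (fpos y z).ne'
    rw [hsupp, measure_univ]; norm_num
  have hμfi : ∀ y : EuclideanSpace ℝ (Fin n), Integrable (fun z => ‖μ z‖ * f y z) π := by
    intro y
    refine (integrable_const (‖y‖ * C + C * σ)).mono'
      ((hμ.norm.mul (hfm y)).aestronglyMeasurable) (ae_of_all _ fun z => ?_)
    have h1 : ‖μ z‖ ≤ ‖y - μ z‖ + ‖y‖ := by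
      calc ‖μ z‖ = ‖(μ z - y) + y‖ := by rw [sub_add_cancel]
        _ ≤ ‖μ z - y‖ + ‖y‖ := norm_add_le _ _
        _ = ‖y - μ z‖ + ‖y‖ := by rw [norm_sub_rev]
    rw [Real.norm_eq_abs, abs_of_nonneg (mul_nonneg (norm_nonneg _) (fpos y z).le)]
    nlinarith [keybd y z, fle y z, (fpos y z).le, norm_nonneg y, norm_nonneg (μ z)]
  have hGi : ∀ y : EuclideanSpace ℝ (Fin n), Integrable (fun z => f y z • μ z) π := by
    intro y
    refine (integrable_const (‖y‖ * C + C * σ)).mono'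
      (((hfm y).aestronglyMeasurable).smul hμ.aestronglyMeasurable) (ae_of_all _ fun z => ?_)
    rw [norm_smul, Real.norm_eq_abs, abs_of_pos (fpos y z)]
    have h1 : ‖μ z‖ ≤ ‖y - μ z‖ + ‖y‖ := by
      calc ‖μ z‖ = ‖(μ z - y) + y‖ := by rw [sub_add_cancel]
        _ ≤ ‖μ z - y‖ + ‖y‖ := norm_add_le _ _
        _ = ‖y - μ z‖ + ‖y‖ := by rw [norm_sub_rev]
    nlinarith [keybd y z, fle y z, (fpos y z).le, norm_nonneg y, norm_nonneg (μ z)]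
  -- derivative of f in the first variable
  have hderiv : ∀ (y : EuclideanSpace ℝ (Fin n)) z, HasFDerivAt (fun w => f w z)
      ((-(σ ^ 2)⁻¹ * f y z) • (innerSL ℝ (y - μ z))) y := by
    intro y z
    have hfun : (fun w : EuclideanSpace ℝ (Fin n) => f w z) =
        fun w => C * Real.exp ((-(2 * σ ^ 2)⁻¹) * ‖w - μ z‖ ^ 2) := by
      funext w; rw [hf]; congr 1; congr 1; ring
    rw [hfun]
    have h1 : HasFDerivAt (fun w : EuclideanSpace ℝ (Fin n) => ‖w - μ z‖ ^ 2)
        (2 • innerSL ℝ (y - μ z)) y := by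
      simpa using ((hasFDerivAt_id y).sub_const (μ z)).norm_sq
    have h2 := ((h1.const_mul ((-(2 * σ ^ 2)⁻¹ : ℝ))).exp).const_mul C
    refine h2.congr_fderiv ?_
    ext w
    have harg : (-(2 * σ ^ 2)⁻¹) * ‖y - μ z‖ ^ 2 = -‖y - μ z‖ ^ 2 / (2 * σ ^ 2) := by
      ring
    simp only [ContinuousLinearMap.coe_smul', Pi.smul_apply, smul_eq_mul,
      ContinuousLinearMap.coe_smul, hf, harg]
    have hσ2 : (σ : ℝ) ^ 2 ≠ 0 := by positivity
    field_simp
    ring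
  -- measurability of the derivative integrand
  have hF'meas : AEStronglyMeasurable
      (fun z => (-(σ ^ 2)⁻¹ * f x z) • (innerSL ℝ (x - μ z))) π := by
    refine AEStronglyMeasurable.fun_smul ?_ ?_
    · exact ((hfm x).const_mul _).aestronglyMeasurable
    · exact (innerSL ℝ).continuous.comp_aestronglyMeasurable
        (measurable_const.sub hμ).aestronglyMeasurable
  have hbound : ∀ᵐ z ∂π, ∀ y ∈ Metric.ball x 1,
      ‖(-(σ ^ 2)⁻¹ * f y z) • (innerSL ℝ (y - μ z))‖ ≤ (σ ^ 2)⁻¹ * (C * σ) := by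
    refine ae_of_all _ fun z y _ => ?_
    have hns := norm_smul (-(σ ^ 2)⁻¹ * f y z) ((innerSL ℝ) (y - μ z))
    rw [hns, Real.norm_eq_abs, innerSL_apply_norm]
    have habs : |(-(σ ^ 2)⁻¹ * f y z)| = (σ ^ 2)⁻¹ * f y z := by
      rw [neg_mul, abs_neg, abs_of_nonneg (mul_nonneg (by positivity) (fpos y z).le)]
    rw [habs, mul_assoc]
    have h2 : f y z * ‖y - μ z‖ ≤ C * σ := by
      rw [mul_comm]; exact keybd y z
    have h3 : (0:ℝ) ≤ (σ ^ 2)⁻¹ := by positivity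
    exact mul_le_mul_of_nonneg_left h2 h3
  have hFd : HasFDerivAt (fun y => ∫ z, f y z ∂π)
      (∫ z, (-(σ ^ 2)⁻¹ * f x z) • (innerSL ℝ (x - μ z)) ∂π) x :=
    hasFDerivAt_integral_of_dominated_of_fderiv_le
      (F' := fun y z => (-(σ ^ 2)⁻¹ * f y z) • (innerSL ℝ (y - μ z))) (Metric.ball_mem_nhds x one_pos)
      (Filter.Eventually.of_forall fun y => (hfm y).aestronglyMeasurable) (hfi x)
      hF'meas hbound (integrable_const _)
      (ae_of_all _ fun z y _ => hderiv y z)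
  set I : EuclideanSpace ℝ (Fin n) := ∫ z, f x z • μ z ∂π with hI
  set g : EuclideanSpace ℝ (Fin n) := (-(σ ^ 2)⁻¹) • ((p x) • x - I) with hg
  have hInt1 : Integrable (fun z => f x z • (x - μ z)) π := by
    have heq : (fun z => f x z • (x - μ z))
        = fun z => f x z • x - f x z • μ z := by
      funext z; rw [smul_sub]
    rw [heq]
    exact ((hfi x).smul_const x).sub (hGi x)
  have hInt2 : Integrable (fun z => (-(σ ^ 2)⁻¹ * f x z) • (x - μ z)) π := by
    have heq : (fun z => (-(σ ^ 2)⁻¹ * f x z) • (x - μ z))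
        = fun z => (-(σ ^ 2)⁻¹ : ℝ) • (f x z • (x - μ z)) := by
      funext z; rw [mul_smul]
    rw [heq]
    exact hInt1.smul (-(σ ^ 2)⁻¹ : ℝ)
  have hvec : (∫ z, (-(σ ^ 2)⁻¹ * f x z) • (innerSL ℝ (x - μ z)) ∂π)
      = innerSL ℝ g := by
    have h1 : (fun z => (-(σ ^ 2)⁻¹ * f x z) • (innerSL ℝ (x - μ z)))
        = fun z => innerSL ℝ ((-(σ ^ 2)⁻¹ * f x z) • (x - μ z)) := by
      funext z; exact ((innerSL ℝ).map_smul _ _).symm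
    rw [h1, ContinuousLinearMap.integral_comp_comm _ hInt2]
    congr 1
    have h2 : (fun z => (-(σ ^ 2)⁻¹ * f x z) • (x - μ z))
        = fun z => (-(σ ^ 2)⁻¹ : ℝ) • (f x z • x - f x z • μ z) := by
      funext z; rw [mul_smul, smul_sub]
    rw [h2, integral_smul, hg]
    congr 1
    rw [integral_sub ((hfi x).smul_const x) (hGi x), integral_smul_const, hp, hI]
  have hpF : HasFDerivAt p (innerSL ℝ g) x := by
    have hpe : p = fun y => ∫ z, f y z ∂π := funext hp
    rw [hpe, ← hvec]; exact hFd
  have hlog : HasFDerivAt (fun y => Real.log (p y))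
      ((p x)⁻¹ • innerSL ℝ g) x := hpF.log (hppos x).ne'
  have hgrad : HasGradientAt (fun y => Real.log (p y)) ((p x)⁻¹ • g) x := by
    rw [hasGradientAt_iff_hasFDerivAt]
    refine hlog.congr_fderiv ?_
    ext w
    simp [InnerProductSpace.toDual_apply_apply, real_inner_smul_left]
  refine ⟨hppos x, hμfi x, hgrad.differentiableAt, ?_⟩
  rw [hgrad.gradient, hg]
  have hpx : p x ≠ 0 := (hppos x).ne'
  have hσ2 : (σ : ℝ) ^ 2 ≠ 0 := by positivity
  match_scalars <;> (field_simp; try ring)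
end

section
/- Let n be a positive natural number, let Z be a measurable space, let π be a probability measure on Z, let μ : Z → ℝⁿ be measurable, and let σ > 0. Define f(x,z) = (2πσ²)^{-n/2} · exp(-‖x - μ(z)‖²/(2σ²)) and p(x) = ∫ f(x,z) dπ(z), and let m(x) = (∫ μ(z) · f(x,z) dπ(z)) / p(x) denote the posterior mean reconstruction. Then for every x ∈ ℝⁿ, the gradient of log p at x vanishes if and only if m(x) = x. In particular, every critical point of the marginal log-density p (hence every local maximum of p) is exactly a point whose average posterior reconstruction equals the point itself. -/
open MeasureTheory

lemma vae_gauss_mul_le (σ d : ℝ) (hσ : 0 < σ) (hd : 0 ≤ d) :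
    Real.exp (-d ^ 2 / (2 * σ ^ 2)) * d ≤ σ := by
  have hpos : (0:ℝ) < Real.exp (d ^ 2 / (2 * σ ^ 2)) := Real.exp_pos _
  have h1 : Real.exp (-d ^ 2 / (2 * σ ^ 2)) = (Real.exp (d ^ 2 / (2 * σ ^ 2)))⁻¹ := by
    rw [← Real.exp_neg]; ring_nf
  have h2 : d ^ 2 / (2 * σ ^ 2) + 1 ≤ Real.exp (d ^ 2 / (2 * σ ^ 2)) :=
    Real.add_one_le_exp _
  rw [h1, inv_mul_le_iff₀ hpos]
  have h3 : σ * (d ^ 2 / (2 * σ ^ 2) + 1) ≤ σ * Real.exp (d ^ 2 / (2 * σ ^ 2)) :=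
    mul_le_mul_of_nonneg_left h2 hσ.le
  have h4 : d ≤ σ * (d ^ 2 / (2 * σ ^ 2) + 1) := by
    rw [← sub_nonneg]
    have h5 : σ * (d ^ 2 / (2 * σ ^ 2) + 1) - d = ((d - σ) ^ 2 + σ ^ 2) / (2 * σ) := by
      field_simp; ring
    rw [h5]; positivity
  linarith

/-- Critical points of the VAE log-marginal density are exactly the points whose
average posterior reconstruction is perfect: with the setup of Proposition 1
(`f(x,z) = (2πσ²)^{-n/2} exp(-‖x-μ(z)‖²/(2σ²))`, `p(x) = ∫ f(x,z) dπ(z)`,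
posterior mean `m(x) = (∫ μ(z) f(x,z) dπ(z))/p(x)`), for every `x` the gradient
of `log p` vanishes at `x` if and only if `m(x) = x`. -/
theorem vae_critical_point_iff_perfect_reconstruction
    (n : ℕ) (hn : 0 < n) {Z : Type*} [MeasurableSpace Z]
    (π : Measure Z) [IsProbabilityMeasure π]
    (μ : Z → EuclideanSpace ℝ (Fin n)) (hμ : Measurable μ)
    (σ : ℝ) (hσ : 0 < σ)
    (f : EuclideanSpace ℝ (Fin n) → Z → ℝ)
    (hf : ∀ x z, f x z =
      (2 * Real.pi * σ ^ 2) ^ (-(n : ℝ) / 2) *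
        Real.exp (-‖x - μ z‖ ^ 2 / (2 * σ ^ 2)))
    (p : EuclideanSpace ℝ (Fin n) → ℝ)
    (hp : ∀ x, p x = ∫ z, f x z ∂π)
    (m : EuclideanSpace ℝ (Fin n) → EuclideanSpace ℝ (Fin n))
    (hm : ∀ x, m x = (p x)⁻¹ • ∫ z, f x z • μ z ∂π) :
    ∀ x : EuclideanSpace ℝ (Fin n),
      gradient (fun y => Real.log (p y)) x = 0 ↔ m x = x := by
  intro x
  classical
  set c : ℝ := (2 * Real.pi * σ ^ 2) ^ (-(n : ℝ) / 2) with hcdef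
  have hc0 : 0 < c := Real.rpow_pos_of_pos (by positivity) _
  have hσ2 : (0:ℝ) < σ ^ 2 := by positivity
  have hfpos : ∀ y z, 0 < f y z := fun y z => by
    rw [hf]; positivity
  have hexple : ∀ y z, Real.exp (-‖y - μ z‖ ^ 2 / (2 * σ ^ 2)) ≤ 1 := by
    intro y z
    rw [← Real.exp_zero]
    apply Real.exp_le_exp.mpr
    rw [neg_div]
    exact neg_nonpos.mpr (by positivity)
  have hfle : ∀ y z, f y z ≤ c := by
    intro y z
    rw [hf]
    calc c * Real.exp (-‖y - μ z‖ ^ 2 / (2 * σ ^ 2)) ≤ c * 1 :=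
          mul_le_mul_of_nonneg_left (hexple y z) hc0.le
      _ = c := mul_one c
  have hkey : ∀ y z, f y z * ‖μ z - y‖ ≤ c * σ := by
    intro y z
    rw [hf, norm_sub_rev, mul_assoc]
    exact mul_le_mul_of_nonneg_left
      (vae_gauss_mul_le σ _ hσ (norm_nonneg _)) hc0.le
  -- measurability and integrability
  have hfm : ∀ y, Measurable (f y) := by
    intro y
    have hfy : f y = fun z => c * Real.exp (-‖y - μ z‖ ^ 2 / (2 * σ ^ 2)) :=
      funext fun z => hf y z
    rw [hfy]
    exact ((((measurable_const.sub hμ).norm.pow_const 2).neg.div_const _).exp).const_mul c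
  have hfi : ∀ y, Integrable (f y) π := by
    intro y
    refine (integrable_const c).mono' (hfm y).aestronglyMeasurable ?_
    filter_upwards with z
    rw [Real.norm_eq_abs, abs_of_pos (hfpos y z)]
    exact hfle y z
  have hpx : 0 < p x := by
    rw [hp]
    rw [integral_pos_iff_support_of_nonneg_ae
      (Filter.Eventually.of_forall fun z => (hfpos x z).le) (hfi x)]
    have hs : Function.support (f x) = Set.univ :=
      Set.eq_univ_of_forall fun z => (hfpos x z).ne'
    rw [hs]
    simp
  have hgm : ∀ y, AEStronglyMeasurable (fun z => f y z • μ z) π := fun y =>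
    (hfm y).aestronglyMeasurable.smul hμ.aestronglyMeasurable
  have hIμ : Integrable (fun z => f x z • μ z) π := by
    refine (integrable_const (c * ‖x‖ + c * σ)).mono' (hgm x) ?_
    filter_upwards with z
    rw [norm_smul, Real.norm_eq_abs, abs_of_pos (hfpos x z)]
    have h1 : ‖μ z‖ - ‖x‖ ≤ ‖μ z - x‖ := norm_sub_norm_le _ _
    calc f x z * ‖μ z‖ ≤ f x z * (‖x‖ + ‖μ z - x‖) :=
          mul_le_mul_of_nonneg_left (by linarith) (hfpos x z).le
      _ = f x z * ‖x‖ + f x z * ‖μ z - x‖ := by ring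
      _ ≤ c * ‖x‖ + c * σ :=
          add_le_add (mul_le_mul_of_nonneg_right (hfle x z) (norm_nonneg x)) (hkey x z)
  -- the pointwise derivative
  set F' : EuclideanSpace ℝ (Fin n) → Z → (EuclideanSpace ℝ (Fin n) →L[ℝ] ℝ) :=
    fun y z => ((σ ^ 2)⁻¹ * f y z) • innerSL ℝ (μ z - y) with hF'def
  have hderiv : ∀ y z, HasFDerivAt (fun w => f w z) (F' y z) y := by
    intro y z
    have hfz : (fun w => f w z)
        = fun w => c * Real.exp (-‖w - μ z‖ ^ 2 / (2 * σ ^ 2)) :=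
      funext fun w => hf w z
    rw [hfz]
    have h1 : HasFDerivAt (fun w : EuclideanSpace ℝ (Fin n) => w - μ z)
        (ContinuousLinearMap.id ℝ (EuclideanSpace ℝ (Fin n))) y :=
      (hasFDerivAt_id y).sub_const (μ z)
    have h2 := h1.norm_sq
    have h3 : HasFDerivAt (fun w : EuclideanSpace ℝ (Fin n) =>
        -‖w - μ z‖ ^ 2 / (2 * σ ^ 2))
        ((-(2 * σ ^ 2)⁻¹) • (2 • (innerSL ℝ (y - μ z)).comp
          (ContinuousLinearMap.id ℝ (EuclideanSpace ℝ (Fin n))))) y := by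
      have hrw : (fun w : EuclideanSpace ℝ (Fin n) => -‖w - μ z‖ ^ 2 / (2 * σ ^ 2))
          = fun w => (-(2 * σ ^ 2)⁻¹) * ‖w - μ z‖ ^ 2 := by
        funext w; ring
      rw [hrw]
      exact h2.const_mul _
    have h5 := h3.exp.const_mul c
    refine h5.congr_fderiv ?_
    ext u
    simp only [hF'def, ContinuousLinearMap.smul_apply, ContinuousLinearMap.comp_apply,
      ContinuousLinearMap.coe_id', id_eq, innerSL_apply_apply, smul_eq_mul, nsmul_eq_mul,
      Nat.cast_ofNat, inner_sub_left, hf]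
    ring
  have hF'le : ∀ y z, ‖F' y z‖ ≤ (σ ^ 2)⁻¹ * (c * σ) := by
    intro y z
    have hnn : (0:ℝ) < (σ ^ 2)⁻¹ * f y z := mul_pos (inv_pos.2 hσ2) (hfpos y z)
    have hsm : F' y z = innerSL ℝ (((σ ^ 2)⁻¹ * f y z) • (μ z - y)) := by
      ext u
      simp only [hF'def, ContinuousLinearMap.smul_apply, innerSL_apply_apply, smul_eq_mul,
        real_inner_smul_left]
    calc ‖F' y z‖ = ((σ ^ 2)⁻¹ * f y z) * ‖μ z - y‖ := by
          rw [hsm, innerSL_apply_norm, norm_smul, Real.norm_eq_abs, abs_of_pos hnn]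
      _ = (σ ^ 2)⁻¹ * (f y z * ‖μ z - y‖) := by ring
      _ ≤ (σ ^ 2)⁻¹ * (c * σ) :=
          mul_le_mul_of_nonneg_left (hkey y z) (inv_pos.2 hσ2).le
  have hF'meas : AEStronglyMeasurable (F' x) π := by
    have h1 : AEStronglyMeasurable (fun z => innerSL ℝ (μ z - x)) π :=
      (innerSL ℝ).continuous.comp_aestronglyMeasurable
        ((hμ.sub_const x).aestronglyMeasurable)
    exact (((hfm x).const_mul _).aestronglyMeasurable).smul h1
  have hF'int : Integrable (F' x) π :=
    (integrable_const ((σ ^ 2)⁻¹ * (c * σ))).mono' hF'meas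
      (Filter.Eventually.of_forall fun z => hF'le x z)
  -- differentiation under the integral
  have hP : HasFDerivAt (fun y => ∫ z, f y z ∂π) (∫ z, F' x z ∂π) x := by
    apply hasFDerivAt_integral_of_dominated_of_fderiv_le
      (bound := fun _ => (σ ^ 2)⁻¹ * (c * σ)) (s := Set.univ) Filter.univ_mem
      (Filter.Eventually.of_forall fun y => (hfm y).aestronglyMeasurable)
      (hfi x) hF'meas
      (Filter.Eventually.of_forall fun z y _ => hF'le y z)
      (integrable_const _)
      (Filter.Eventually.of_forall fun z y _ => hderiv y z)
  have hPp : HasFDerivAt p (∫ z, F' x z ∂π) x := by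
    have hpe : p = fun y => ∫ z, f y z ∂π := funext hp
    rw [hpe]; exact hP
  set I : EuclideanSpace ℝ (Fin n) := ∫ z, f x z • μ z ∂π with hIdef
  -- identify the derivative
  have hgint : Integrable (fun z => f x z • (μ z - x)) π := by
    have hrw : (fun z => f x z • (μ z - x)) = fun z => f x z • μ z - f x z • x :=
      funext fun z => smul_sub _ _ _
    rw [hrw]
    exact hIμ.sub ((hfi x).smul_const x)
  have hint2 : Integrable (fun z => ((σ ^ 2)⁻¹ * f x z) • (μ z - x)) π := by
    have hrw : (fun z => ((σ ^ 2)⁻¹ * f x z) • (μ z - x))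
        = fun z => (σ ^ 2)⁻¹ • (f x z • (μ z - x)) :=
      funext fun z => (smul_smul _ _ _).symm
    rw [hrw]
    exact hgint.smul (σ ^ 2)⁻¹
  have hIg : ∫ z, ((σ ^ 2)⁻¹ * f x z) • (μ z - x) ∂π
      = (σ ^ 2)⁻¹ • (I - p x • x) := by
    rw [show (fun z => ((σ ^ 2)⁻¹ * f x z) • (μ z - x))
        = fun z => (σ ^ 2)⁻¹ • (f x z • μ z - f x z • x) from
      funext fun z => by rw [← smul_smul, smul_sub]]
    rw [integral_smul, integral_sub hIμ ((hfi x).smul_const x),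
      integral_smul_const, ← hp, ← hIdef]
  have hEq : (∫ z, F' x z ∂π)
      = InnerProductSpace.toDual ℝ (EuclideanSpace ℝ (Fin n))
          ((σ ^ 2)⁻¹ • (I - p x • x)) := by
    ext u
    rw [ContinuousLinearMap.integral_apply hF'int u]
    have h1 : ∀ z, F' x z u
        = (inner ℝ u (((σ ^ 2)⁻¹ * f x z) • (μ z - x)) : ℝ) := by
      intro z
      simp only [hF'def, ContinuousLinearMap.smul_apply, innerSL_apply_apply,
        smul_eq_mul, real_inner_smul_right]
      rw [real_inner_comm]
    simp_rw [h1]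
    rw [integral_inner hint2 u, hIg, InnerProductSpace.toDual_apply_apply]
    exact real_inner_comm _ _
  rw [hEq] at hPp
  have hlog := hPp.log hpx.ne'
  set G : EuclideanSpace ℝ (Fin n) := ((p x)⁻¹ * (σ ^ 2)⁻¹) • (I - p x • x) with hGdef
  have hgrad : HasGradientAt (fun y => Real.log (p y)) G x := by
    rw [hasGradientAt_iff_hasFDerivAt]
    have heq2 : InnerProductSpace.toDual ℝ (EuclideanSpace ℝ (Fin n)) G
        = (p x)⁻¹ • (InnerProductSpace.toDual ℝ (EuclideanSpace ℝ (Fin n))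
            ((σ ^ 2)⁻¹ • (I - p x • x))) := by
      ext u
      simp only [hGdef, InnerProductSpace.toDual_apply_apply, ContinuousLinearMap.smul_apply,
        InnerProductSpace.toDual_apply_apply, smul_eq_mul, real_inner_smul_left]
      ring
    rw [heq2]
    exact hlog
  rw [hgrad.gradient, hm x, ← hIdef]
  have hm0 : ((p x)⁻¹ * (σ ^ 2)⁻¹) ≠ 0 :=
    mul_ne_zero (inv_ne_zero hpx.ne') (inv_ne_zero hσ2.ne')
  constructor
  · intro h0
    have hsub : I - p x • x = 0 := by
      rcases smul_eq_zero.mp (hGdef ▸ h0) with h | h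
      · exact absurd h hm0
      · exact h
    have hIx : I = p x • x := sub_eq_zero.mp hsub
    rw [hIx, inv_smul_smul₀ hpx.ne']
  · intro hmx
    have hIx : I = p x • x := by
      have h1 := congrArg (fun v : EuclideanSpace ℝ (Fin n) => p x • v) hmx
      simpa [smul_inv_smul₀ hpx.ne'] using h1
    rw [hGdef, hIx, sub_self, smul_zero]
end

section
/- Let n be a positive natural number, let Z be a measurable space with a probability measure π, let μ : Z → ℝⁿ be measurable, and let σ, τ > 0. Define f(x,z) = (2πσ²)^{-n/2} exp(-‖x-μ(z)‖²/(2σ²)), p(x) = ∫ f(x,z) dπ(z), the posterior mean m(x) = (∫ μ(z) f(x,z) dπ(z))/p(x), and the centered Gaussian kernel g(y) = (2πτ²)^{-n/2} exp(-‖y‖²/(2τ²)) on ℝⁿ. Define the smoothed log-density L_τ(x) = ∫_{ℝⁿ} log p(x-y) · g(y) dy. Assume that for each x₀ there is a neighborhood U of x₀ and a Lebesgue-g-integrable dominating function h with |log p(x-y)| ≤ h(y) and ‖m(x-y) - (x-y)‖/σ² ≤ h(y) for all x ∈ U, y ∈ ℝⁿ. Then L_τ is differentiable and, for every x ∈ ℝⁿ,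 ∇L_τ(x) = σ^{-2} · ( ∫_{ℝⁿ} m(x-y) g(y) dy − x ). (The gradient of the smoothed VAE log-density equals, up to the factor σ^{-2}, the Gaussian-averaged posterior reconstruction minus x, using that ∫ y g(y) dy = 0 and ∫ g(y) dy = 1.) -/
open MeasureTheory

open Real in
private lemma vae_gauss_int (n : ℕ) {b : ℝ} (hb : 0 < b) :
    ∫ v : EuclideanSpace ℝ (Fin n), rexp (-b * ‖v‖ ^ 2) = (π / b) ^ ((n : ℝ) / 2) := by
  rw [GaussianFourier.integral_rexp_neg_mul_sq_norm hb]
  simp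

open Real in
open Real in
private lemma vae_gauss_integrable (n : ℕ) {b : ℝ} (hb : 0 < b) :
    Integrable (fun v : EuclideanSpace ℝ (Fin n) => rexp (-b * ‖v‖ ^ 2)) := by
  have h := GaussianFourier.integrable_cexp_neg_mul_sq_norm_add
    (V := EuclideanSpace ℝ (Fin n)) (b := (b : ℂ)) (by simpa using hb) 0 0
  have h2 := h.re
  refine (integrable_congr ?_).mp h2
  filter_upwards with v
  have h3 : (-(b : ℂ) * ‖v‖ ^ 2 + 0 * ((inner ℝ (0 : EuclideanSpace ℝ (Fin n)) v : ℝ) : ℂ))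
      = ((-b * ‖v‖ ^ 2 : ℝ) : ℂ) := by push_cast; ring
  rw [h3]; rw [RCLike.re_to_complex, Complex.exp_ofReal_re]

open Real in
private lemma vae_r_exp_le {s r : ℝ} (hs : 0 < s) (hr : 0 ≤ r) :
    r * rexp (-r ^ 2 / (2 * s)) ≤ Real.sqrt s := by
  rw [Real.le_sqrt (by positivity) hs.le]
  have h1 : r ^ 2 / s ≤ rexp (r ^ 2 / s) := by
    have := Real.add_one_le_exp (r ^ 2 / s); linarith
  have h2 : r ^ 2 ≤ rexp (r ^ 2 / s) * s := (div_le_iff₀ hs).mp h1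
  have h3 : rexp (-r ^ 2 / (2 * s)) ^ 2 = rexp (-(r ^ 2 / s)) := by
    rw [sq, ← Real.exp_add]
    congr 1
    field_simp
    ring
  rw [mul_pow, h3, Real.exp_neg, mul_inv_le_iff₀ (Real.exp_pos _)]
  linarith

set_option maxHeartbeats 2000000 in
/-- **Gradient of the smoothed VAE log-density.** With the setup of Proposition 1
(`f(x,z) = (2πσ²)^{-n/2} exp(-‖x-μ(z)‖²/(2σ²))`, marginal `p(x) = ∫ f(x,z) dπ(z)`,
posterior mean `m(x) = (∫ μ(z) f(x,z) dπ(z))/p(x)`), and the centered Gaussian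
kernel `g(y) = (2πτ²)^{-n/2} exp(-‖y‖²/(2τ²))` on ℝⁿ, the smoothed log-density
`L_τ(x) = ∫ log p(x-y) g(y) dy` (under local domination of `|log p(x-y)|` and
`‖m(x-y)-(x-y)‖/σ²` by a `g`-integrable function) is differentiable with
`∇L_τ(x) = σ⁻² (∫ m(x-y) g(y) dy − x)`. -/
theorem gradient_smoothed_vae_log_density
    (n : ℕ) (hn : 0 < n) {Z : Type*} [MeasurableSpace Z]
    (π : Measure Z) [IsProbabilityMeasure π]
    (μ : Z → EuclideanSpace ℝ (Fin n)) (hμ : Measurable μ)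
    (σ τ : ℝ) (hσ : 0 < σ) (hτ : 0 < τ)
    (f : EuclideanSpace ℝ (Fin n) → Z → ℝ)
    (hf : ∀ x z, f x z =
      (2 * Real.pi * σ ^ 2) ^ (-(n : ℝ) / 2) *
        Real.exp (-‖x - μ z‖ ^ 2 / (2 * σ ^ 2)))
    (p : EuclideanSpace ℝ (Fin n) → ℝ)
    (hp : ∀ x, p x = ∫ z, f x z ∂π)
    (m : EuclideanSpace ℝ (Fin n) → EuclideanSpace ℝ (Fin n))
    (hm : ∀ x, m x = (p x)⁻¹ • ∫ z, f x z • μ z ∂π)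
    (g : EuclideanSpace ℝ (Fin n) → ℝ)
    (hg : ∀ y, g y =
      (2 * Real.pi * τ ^ 2) ^ (-(n : ℝ) / 2) *
        Real.exp (-‖y‖ ^ 2 / (2 * τ ^ 2)))
    (Lτ : EuclideanSpace ℝ (Fin n) → ℝ)
    (hLτ : ∀ x, Lτ x = ∫ y, Real.log (p (x - y)) * g y)
    (hdom : ∀ x₀ : EuclideanSpace ℝ (Fin n), ∃ U ∈ nhds x₀,
      ∃ h : EuclideanSpace ℝ (Fin n) → ℝ,
        Integrable (fun y => h y * g y) ∧
        ∀ x ∈ U, ∀ y, |Real.log (p (x - y))| ≤ h y ∧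
          ‖m (x - y) - (x - y)‖ / σ ^ 2 ≤ h y) :
    Differentiable ℝ Lτ ∧
    ∀ x, gradient Lτ x = (σ ^ 2)⁻¹ • ((∫ y, g y • m (x - y)) - x) := by
  classical
  have hσ2 : (0 : ℝ) < σ ^ 2 := by positivity
  set C : ℝ := (2 * Real.pi * σ ^ 2) ^ (-(n : ℝ) / 2) with hCdef
  have hCpos : 0 < C := Real.rpow_pos_of_pos (by positivity) _
  -- basic bounds on f
  have hfpos : ∀ x z, 0 < f x z := fun x z => by rw [hf]; positivity
  have hfleC : ∀ x z, f x z ≤ C := by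
    intro x z
    rw [hf]
    refine mul_le_of_le_one_right hCpos.le (Real.exp_le_one_iff.mpr ?_)
    exact div_nonpos_of_nonpos_of_nonneg (neg_nonpos.mpr (by positivity)) (by positivity)
  have hfnorm : ∀ x z, f x z * ‖x - μ z‖ ≤ C * σ := by
    intro x z
    have h1 : ‖x - μ z‖ * Real.exp (-‖x - μ z‖ ^ 2 / (2 * σ ^ 2)) ≤ σ := by
      have := vae_r_exp_le hσ2 (norm_nonneg (x - μ z))
      rwa [Real.sqrt_sq hσ.le] at this
    calc f x z * ‖x - μ z‖
        = C * (‖x - μ z‖ * Real.exp (-‖x - μ z‖ ^ 2 / (2 * σ ^ 2))) := by rw [hf]; ring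
      _ ≤ C * σ := mul_le_mul_of_nonneg_left h1 hCpos.le
  -- measurability and continuity of f
  have hfmeas : ∀ x, Measurable (fun z => f x z) := by
    intro x
    simp only [hf]
    exact measurable_const.mul
      (Real.measurable_exp.comp
        ((((measurable_const.sub hμ).norm.pow_const 2).neg).div_const _))
  have hfcont : ∀ z, Continuous (fun x => f x z) := by
    intro z
    simp only [hf]
    exact continuous_const.mul
      (Real.continuous_exp.comp
        ((((continuous_id.sub continuous_const).norm.pow 2).neg).div_const _))
  -- integrability of f and f • μ
  have hf_int : ∀ x, Integrable (fun z => f x z) π := by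
    intro x
    refine (integrable_const C).mono' (hfmeas x).aestronglyMeasurable ?_
    filter_upwards with z
    rw [Real.norm_eq_abs, abs_of_pos (hfpos x z)]
    exact hfleC x z
  have hppos : ∀ x, 0 < p x := by
    intro x
    rw [hp]
    rw [integral_pos_iff_support_of_nonneg (fun z => (hfpos x z).le) (hf_int x)]
    have : Function.support (fun z => f x z) = Set.univ :=
      Set.eq_univ_of_forall fun z => (hfpos x z).ne'
    rw [this]
    simp
  have hmu_norm : ∀ (x : EuclideanSpace ℝ (Fin n)) z,
      f x z * ‖μ z‖ ≤ C * σ + C * ‖x‖ := by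
    intro x z
    have h1 : ‖μ z‖ ≤ ‖x - μ z‖ + ‖x‖ := by
      have := norm_sub_le (x - μ z) x
      simpa using this
    calc f x z * ‖μ z‖ ≤ f x z * (‖x - μ z‖ + ‖x‖) :=
          mul_le_mul_of_nonneg_left h1 (hfpos x z).le
      _ = f x z * ‖x - μ z‖ + f x z * ‖x‖ := by ring
      _ ≤ C * σ + C * ‖x‖ :=
          add_le_add (hfnorm x z)
            (mul_le_mul_of_nonneg_right (hfleC x z) (norm_nonneg x))
  have hfmu_int : ∀ x, Integrable (fun z => f x z • μ z) π := by
    intro x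
    refine (integrable_const (C * σ + C * ‖x‖)).mono'
      ((hfmeas x).aestronglyMeasurable.smul hμ.aestronglyMeasurable) ?_
    filter_upwards with z
    rw [norm_smul, Real.norm_eq_abs, abs_of_pos (hfpos x z)]
    exact hmu_norm x z
  -- derivative of f in x
  set w : EuclideanSpace ℝ (Fin n) → Z → EuclideanSpace ℝ (Fin n) :=
    fun x z => ((σ ^ 2)⁻¹ * f x z) • (μ z - x) with hwdef
  have hfderiv : ∀ z x, HasFDerivAt (fun x => f x z) (innerSL ℝ (w x z)) x := by
    intro z x
    have hfun : (fun x => f x z)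
        = fun x => C * Real.exp ((2 * σ ^ 2)⁻¹ * -‖x - μ z‖ ^ 2) := by
      funext x
      have harg : -‖x - μ z‖ ^ 2 / (2 * σ ^ 2) = (2 * σ ^ 2)⁻¹ * -‖x - μ z‖ ^ 2 := by
        ring
      rw [hf, harg]
    rw [hfun]
    have h1 : HasFDerivAt (fun x : EuclideanSpace ℝ (Fin n) => x - μ z)
        (ContinuousLinearMap.id ℝ _) x := (hasFDerivAt_id x).sub_const _
    have h3 := (((h1.norm_sq.neg).const_mul ((2 * σ ^ 2)⁻¹)).exp).const_mul C
    refine h3.congr_fderiv ?_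
    ext v
    simp only [hwdef, innerSL_apply_apply, ContinuousLinearMap.smul_apply,
      ContinuousLinearMap.coe_smul', Pi.smul_apply, ContinuousLinearMap.comp_id,
      ContinuousLinearMap.coe_neg', ContinuousLinearMap.coe_comp',
      Function.comp_apply, smul_eq_mul]
    rw [real_inner_smul_left]
    have hsub : μ z - x = -(x - μ z) := by abel
    rw [hsub, inner_neg_left]
    have hexpeq : Real.exp ((2 * σ ^ 2)⁻¹ * -‖x - μ z‖ ^ 2)
        = Real.exp (-‖x - μ z‖ ^ 2 / (2 * σ ^ 2)) := by
      congr 1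
      ring
    have hfv : f x z = C * Real.exp (-‖x - μ z‖ ^ 2 / (2 * σ ^ 2)) := hf x z
    simp only [two_smul, ContinuousLinearMap.add_apply, innerSL_apply_apply, Pi.neg_apply,
      Pi.add_apply]
    rw [hexpeq, hfv]
    field_simp
    ring
  -- bound on w
  have hwnorm : ∀ x z, ‖w x z‖ ≤ (σ ^ 2)⁻¹ * (C * σ) := by
    intro x z
    simp only [hwdef, norm_smul, Real.norm_eq_abs]
    rw [abs_of_pos (mul_pos (by positivity) (hfpos x z)), mul_assoc]
    refine mul_le_mul_of_nonneg_left ?_ (by positivity)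
    rw [show ‖μ z - x‖ = ‖x - μ z‖ by rw [← norm_neg]; congr 1; abel]
    exact hfnorm x z
  have hwmeas : ∀ x, AEStronglyMeasurable (fun z => w x z) π := by
    intro x
    exact ((measurable_const.mul (hfmeas x)).aestronglyMeasurable.smul
      (hμ.sub measurable_const).aestronglyMeasurable)
  have hw_int : ∀ x, Integrable (fun z => w x z) π := by
    intro x
    refine (integrable_const ((σ ^ 2)⁻¹ * (C * σ))).mono' (hwmeas x) ?_
    filter_upwards with z using hwnorm x z
  -- derivative of p
  set vp : EuclideanSpace ℝ (Fin n) → EuclideanSpace ℝ (Fin n) :=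
    fun x => ∫ z, w x z ∂π with hvpdef
  have hpderiv : ∀ x, HasFDerivAt p (innerSL ℝ (vp x)) x := by
    intro x₀
    have key := hasFDerivAt_integral_of_dominated_of_fderiv_le
      (F := fun x z => f x z) (F' := fun x z => innerSL ℝ (w x z))
      (μ := π) (x₀ := x₀) (bound := fun _ => (σ ^ 2)⁻¹ * (C * σ))
      (Metric.ball_mem_nhds x₀ one_pos)
      (Filter.Eventually.of_forall fun x => (hfmeas x).aestronglyMeasurable)
      (hf_int x₀)
      ((innerSL ℝ).continuous.comp_aestronglyMeasurable (hwmeas x₀))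
      (ae_of_all _ fun z x _ => by rw [innerSL_apply_norm]; exact hwnorm x z)
      (integrable_const _)
      (ae_of_all _ fun z x _ => hfderiv z x)
    have hfun : (fun x => ∫ z, f x z ∂π) = p := funext fun x => (hp x).symm
    rw [hfun] at key
    rwa [ContinuousLinearMap.integral_comp_comm (innerSL ℝ) (hw_int x₀)] at key
  -- identify vp
  have hvp_eq : ∀ x, vp x = (σ ^ 2)⁻¹ • ((∫ z, f x z • μ z ∂π) - p x • x) := by
    intro x
    have hsplit : (fun z => w x z)
        = fun z => (σ ^ 2)⁻¹ • (f x z • μ z - f x z • x) := by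
      funext z
      simp only [hwdef, smul_sub, smul_smul]
    simp only [hvpdef, hsplit]
    rw [integral_smul, integral_sub (hfmu_int x) ((hf_int x).smul_const x),
      integral_smul_const, hp]
  set q : EuclideanSpace ℝ (Fin n) → EuclideanSpace ℝ (Fin n) :=
    fun x => (σ ^ 2)⁻¹ • (m x - x) with hqdef
  have hq_eq : ∀ x, (p x)⁻¹ • vp x = q x := by
    intro x
    rw [hvp_eq x]
    have hqx : q x = (σ ^ 2)⁻¹ • (m x - x) := rfl
    rw [hqx, hm x]
    rw [smul_comm, smul_sub, smul_smul, inv_mul_cancel₀ (hppos x).ne', one_smul]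
  have hlog : ∀ u, HasFDerivAt (fun u => Real.log (p u)) (innerSL ℝ (q u)) u := by
    intro u
    have := (hpderiv u).log (hppos u).ne'
    rwa [← _root_.map_smul, hq_eq] at this
  -- continuity of p, m, q
  have hpcont : Continuous p :=
    continuous_iff_continuousAt.mpr fun x => (hpderiv x).differentiableAt.continuousAt
  have hNfcont : Continuous (fun x => ∫ z, f x z • μ z ∂π) := by
    rw [continuous_iff_continuousAt]
    intro x₀
    refine continuousAt_of_dominated
      (Filter.Eventually.of_forall fun x =>
        ((hfmeas x).aestronglyMeasurable.smul hμ.aestronglyMeasurable))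
      ?_ (integrable_const (C * σ + C * (‖x₀‖ + 1))) ?_
    · filter_upwards [Metric.ball_mem_nhds x₀ one_pos] with x hx
      filter_upwards with z
      rw [norm_smul, Real.norm_eq_abs, abs_of_pos (hfpos x z)]
      refine (hmu_norm x z).trans ?_
      have hxle : ‖x‖ ≤ ‖x₀‖ + 1 := by
        have := mem_ball_iff_norm.mp hx
        have h2 := norm_le_norm_add_norm_sub' x x₀
        simp only [Metric.mem_ball, dist_eq_norm] at hx
        have : ‖x‖ ≤ ‖x₀‖ + ‖x - x₀‖ := by
          have := norm_sub_le (x - x₀) (-x₀)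
          calc ‖x‖ = ‖(x - x₀) + x₀‖ := by rw [sub_add_cancel]
            _ ≤ ‖x - x₀‖ + ‖x₀‖ := norm_add_le _ _
            _ = ‖x₀‖ + ‖x - x₀‖ := by ring
        linarith
      nlinarith [hCpos.le, hσ.le]
    · filter_upwards with z
      exact ((hfcont z).smul continuous_const).continuousAt
  have hmcont : Continuous m := by
    have hfun : m = fun x => (p x)⁻¹ • ∫ z, f x z • μ z ∂π := funext hm
    rw [hfun]
    exact (hpcont.inv₀ fun x => (hppos x).ne').smul hNfcont
  have hqcont : Continuous q :=
    (hmcont.sub continuous_id : Continuous fun x => m x - x).const_smul (σ ^ 2)⁻¹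
  -- positivity, continuity, integrability of g
  have hgpos : ∀ y, 0 < g y := fun y => by rw [hg]; positivity
  have hgcont : Continuous g := by
    have hgf : g = fun y => (2 * Real.pi * τ ^ 2) ^ (-(n : ℝ) / 2) *
        Real.exp (-‖y‖ ^ 2 / (2 * τ ^ 2)) := funext hg
    rw [hgf]
    exact continuous_const.mul
      (Real.continuous_exp.comp
        ((((continuous_norm.pow 2)).neg).div_const _))
  have hτ2 : (0 : ℝ) < 2 * τ ^ 2 := by positivity
  have hg_eq : g = fun y => (2 * Real.pi * τ ^ 2) ^ (-(n : ℝ) / 2) *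
      Real.exp (-(2 * τ ^ 2)⁻¹ * ‖y‖ ^ 2) := by
    funext y
    rw [hg]
    congr 1
    ring
  have hg_int : Integrable g := by
    rw [hg_eq]
    exact (vae_gauss_integrable n (by positivity)).const_mul _
  have hg_total : ∫ y, g y = 1 := by
    rw [hg_eq, integral_const_mul, vae_gauss_int n (by positivity)]
    rw [show Real.pi / (2 * τ ^ 2)⁻¹ = 2 * Real.pi * τ ^ 2 by rw [division_def, inv_inv]; ring]
    rw [← Real.rpow_add (by positivity)]
    rw [show (-(n:ℝ)/2 + (n:ℝ)/2) = 0 by ring, Real.rpow_zero]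
  -- first moment of g
  have hg_moment : Integrable (fun y : EuclideanSpace ℝ (Fin n) => ‖y‖ * g y) := by
    have hbd : ∀ y : EuclideanSpace ℝ (Fin n), ‖y‖ * g y ≤
        (2 * Real.pi * τ ^ 2) ^ (-(n : ℝ) / 2) * Real.sqrt (2 * τ ^ 2) *
          Real.exp (-(2 * (2 * τ ^ 2))⁻¹ * ‖y‖ ^ 2) := by
      intro y
      rw [hg]
      have hsplit : Real.exp (-‖y‖ ^ 2 / (2 * τ ^ 2))
          = Real.exp (-‖y‖ ^ 2 / (2 * (2 * τ ^ 2))) * Real.exp (-‖y‖ ^ 2 / (2 * (2 * τ ^ 2))) := by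
        rw [← Real.exp_add]
        congr 1
        field_simp
        ring
      rw [hsplit]
      have h1 : ‖y‖ * Real.exp (-‖y‖ ^ 2 / (2 * (2 * τ ^ 2))) ≤ Real.sqrt (2 * τ ^ 2) :=
        vae_r_exp_le hτ2 (norm_nonneg _)
      have h2 : Real.exp (-‖y‖ ^ 2 / (2 * (2 * τ ^ 2))) = Real.exp (-(2 * (2 * τ ^ 2))⁻¹ * ‖y‖ ^ 2) := by
        congr 1
        field_simp
      calc ‖y‖ * ((2 * Real.pi * τ ^ 2) ^ (-(n : ℝ) / 2) *
            (Real.exp (-‖y‖ ^ 2 / (2 * (2 * τ ^ 2))) * Real.exp (-‖y‖ ^ 2 / (2 * (2 * τ ^ 2)))))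
          = (2 * Real.pi * τ ^ 2) ^ (-(n : ℝ) / 2) *
            ((‖y‖ * Real.exp (-‖y‖ ^ 2 / (2 * (2 * τ ^ 2)))) *
              Real.exp (-‖y‖ ^ 2 / (2 * (2 * τ ^ 2)))) := by ring
        _ ≤ (2 * Real.pi * τ ^ 2) ^ (-(n : ℝ) / 2) *
            (Real.sqrt (2 * τ ^ 2) * Real.exp (-‖y‖ ^ 2 / (2 * (2 * τ ^ 2)))) := by
            have hCpos' : (0:ℝ) < (2 * Real.pi * τ ^ 2) ^ (-(n : ℝ) / 2) :=
              Real.rpow_pos_of_pos (by positivity) _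
            refine mul_le_mul_of_nonneg_left ?_ hCpos'.le
            exact mul_le_mul_of_nonneg_right h1 (Real.exp_pos _).le
        _ = (2 * Real.pi * τ ^ 2) ^ (-(n : ℝ) / 2) * Real.sqrt (2 * τ ^ 2) *
            Real.exp (-(2 * (2 * τ ^ 2))⁻¹ * ‖y‖ ^ 2) := by rw [h2]; ring
    refine ((vae_gauss_integrable n (b := (2 * (2 * τ ^ 2))⁻¹)
      (by positivity)).const_mul
      ((2 * Real.pi * τ ^ 2) ^ (-(n : ℝ) / 2) * Real.sqrt (2 * τ ^ 2))).mono'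
      (continuous_norm.mul hgcont).aestronglyMeasurable ?_
    filter_upwards with y
    rw [Real.norm_eq_abs, abs_of_nonneg (mul_nonneg (norm_nonneg _) (hgpos y).le)]
    exact hbd y
  -- ∫ y g y • y = 0
  have hg_mean : (∫ y : EuclideanSpace ℝ (Fin n), g y • y) = 0 := by
    have hneg := integral_neg_eq_self (fun y : EuclideanSpace ℝ (Fin n) => g y • y)
      (volume : Measure (EuclideanSpace ℝ (Fin n)))
    have hsymm : (fun y : EuclideanSpace ℝ (Fin n) => g (-y) • (-y))
        = fun y => -(g y • y) := by
      funext y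
      have : g (-y) = g y := by rw [hg, hg, norm_neg]
      rw [this, smul_neg]
    rw [hsymm, integral_neg] at hneg
    have h2 : (2 : ℝ) • (∫ y : EuclideanSpace ℝ (Fin n), g y • y) = 0 := by
      rw [two_smul]
      nth_rewrite 1 [← hneg]
      exact neg_add_cancel _
    have := smul_eq_zero.mp h2
    simpa using this
  have hgy_int : Integrable (fun y : EuclideanSpace ℝ (Fin n) => g y • y) := by
    refine hg_moment.mono' (hgcont.smul continuous_id).aestronglyMeasurable ?_
    filter_upwards with y
    rw [norm_smul, Real.norm_eq_abs, abs_of_pos (hgpos y), mul_comm]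
  -- main step: fix x₀
  have main : ∀ x₀ : EuclideanSpace ℝ (Fin n),
      HasFDerivAt Lτ (innerSL ℝ ((σ ^ 2)⁻¹ • ((∫ y, g y • m (x₀ - y)) - x₀))) x₀ := by
    intro x₀
    obtain ⟨U, hU, h, hint, hdomle⟩ := hdom x₀
    obtain ⟨ε, hε, hball⟩ := Metric.mem_nhds_iff.mp hU
    have hx₀U : x₀ ∈ U := mem_of_mem_nhds hU
    have hFcont : ∀ x : EuclideanSpace ℝ (Fin n),
        Continuous (fun y => Real.log (p (x - y)) * g y) := by
      intro x
      exact ((hpcont.comp (continuous_const.sub continuous_id)).log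
        (fun y => (hppos _).ne')).mul hgcont
    have hG'cont : ∀ x : EuclideanSpace ℝ (Fin n),
        Continuous (fun y => g y • q (x - y)) := by
      intro x
      exact hgcont.smul (hqcont.comp (continuous_const.sub continuous_id))
    have hqnorm : ∀ x ∈ U, ∀ y, ‖g y • q (x - y)‖ ≤ h y * g y := by
      intro x hx y
      rw [norm_smul, Real.norm_eq_abs, abs_of_pos (hgpos y)]
      have hqxy : q (x - y) = (σ ^ 2)⁻¹ • (m (x - y) - (x - y)) := rfl
      rw [hqxy]
      have : ‖(σ ^ 2)⁻¹ • (m (x - y) - (x - y))‖ = ‖m (x - y) - (x - y)‖ / σ ^ 2 := by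
        rw [norm_smul, Real.norm_eq_abs, abs_of_pos (by positivity : (0:ℝ) < (σ ^ 2)⁻¹)]
        rw [div_eq_inv_mul]
      rw [this, mul_comm]
      exact mul_le_mul_of_nonneg_right ((hdomle x hx y).2) (hgpos y).le
    have hG'int : Integrable (fun y => g y • q (x₀ - y)) := by
      refine hint.mono' (hG'cont x₀).aestronglyMeasurable ?_
      filter_upwards with y
      exact hqnorm x₀ hx₀U y
    have key := hasFDerivAt_integral_of_dominated_of_fderiv_le
      (F := fun x y => Real.log (p (x - y)) * g y)
      (F' := fun x y => innerSL ℝ (g y • q (x - y)))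
      (μ := (volume : Measure (EuclideanSpace ℝ (Fin n)))) (x₀ := x₀)
      (bound := fun y => h y * g y) (Metric.ball_mem_nhds x₀ hε)
      (Filter.Eventually.of_forall fun x => (hFcont x).aestronglyMeasurable)
      (by
        refine hint.mono' (hFcont x₀).aestronglyMeasurable ?_
        filter_upwards with y
        rw [Real.norm_eq_abs, abs_mul, abs_of_pos (hgpos y)]
        exact mul_le_mul_of_nonneg_right ((hdomle x₀ hx₀U y).1) (hgpos y).le)
      ((innerSL ℝ).continuous.comp_aestronglyMeasurable (hG'cont x₀).aestronglyMeasurable)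
      (ae_of_all _ fun y x hx => by
        rw [innerSL_apply_norm]
        exact hqnorm x (hball hx) y)
      hint
      (ae_of_all _ fun y x hx => by
        have hcomp : HasFDerivAt (fun x => Real.log (p (x - y)))
            (innerSL ℝ (q (x - y))) x := by
          have := (hlog (x - y)).comp x ((hasFDerivAt_id x).sub_const y)
          exact this
        have := hcomp.mul_const (g y)
        rwa [← _root_.map_smul] at this)
    have hfun : (fun x => ∫ y, Real.log (p (x - y)) * g y) = Lτ :=
      funext fun x => (hLτ x).symm
    rw [hfun, ContinuousLinearMap.integral_comp_comm (innerSL ℝ) hG'int] at key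
    -- identify the integral
    have hsplit : (∫ y, g y • q (x₀ - y))
        = (σ ^ 2)⁻¹ • ((∫ y, g y • m (x₀ - y)) - x₀) := by
      have hA : Integrable (fun y => g y • m (x₀ - y)) := by
        refine (((hint.const_mul (σ ^ 2)).add (hg_int.const_mul ‖x₀‖)).add hg_moment).mono'
          (hgcont.smul (hmcont.comp (continuous_const.sub continuous_id))).aestronglyMeasurable ?_
        filter_upwards with y
        rw [norm_smul, Real.norm_eq_abs, abs_of_pos (hgpos y)]
        have h1 : ‖m (x₀ - y)‖ ≤ ‖m (x₀ - y) - (x₀ - y)‖ + (‖x₀‖ + ‖y‖) := by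
          calc ‖m (x₀ - y)‖ = ‖(m (x₀ - y) - (x₀ - y)) + (x₀ - y)‖ := by rw [sub_add_cancel]
            _ ≤ ‖m (x₀ - y) - (x₀ - y)‖ + ‖x₀ - y‖ := norm_add_le _ _
            _ ≤ ‖m (x₀ - y) - (x₀ - y)‖ + (‖x₀‖ + ‖y‖) := by
                have := norm_sub_le x₀ y; linarith
        have h2 : ‖m (x₀ - y) - (x₀ - y)‖ ≤ σ ^ 2 * h y := by
          have := (hdomle x₀ hx₀U y).2
          rw [div_le_iff₀ hσ2] at this
          linarith
        calc g y * ‖m (x₀ - y)‖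
            ≤ g y * (σ ^ 2 * h y + (‖x₀‖ + ‖y‖)) := by
              refine mul_le_mul_of_nonneg_left ?_ (hgpos y).le
              linarith
          _ = σ ^ 2 * (h y * g y) + ‖x₀‖ * g y + ‖y‖ * g y := by ring
      have hB : Integrable (fun y : EuclideanSpace ℝ (Fin n) => g y • (x₀ - y)) := by
        have : (fun y : EuclideanSpace ℝ (Fin n) => g y • (x₀ - y))
            = fun y => g y • x₀ - g y • y := by
          funext y; rw [smul_sub]
        rw [this]
        exact (hg_int.smul_const x₀).sub hgy_int
      have heq : (fun y => g y • q (x₀ - y))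
          = fun y => (σ ^ 2)⁻¹ • (g y • m (x₀ - y) - g y • (x₀ - y)) := by
        funext y
        have hqxy : q (x₀ - y) = (σ ^ 2)⁻¹ • (m (x₀ - y) - (x₀ - y)) := rfl
        rw [hqxy, smul_comm, smul_sub]
      rw [heq]
      rw [integral_smul, integral_sub hA hB]
      congr 1
      have hBval : (∫ y : EuclideanSpace ℝ (Fin n), g y • (x₀ - y)) = x₀ := by
        have : (fun y : EuclideanSpace ℝ (Fin n) => g y • (x₀ - y))
            = fun y => g y • x₀ - g y • y := by
          funext y; rw [smul_sub]
        rw [this, integral_sub (hg_int.smul_const x₀) hgy_int, integral_smul_const,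
          hg_total, hg_mean, one_smul, sub_zero]
      rw [hBval]
    rwa [hsplit] at key
  constructor
  · exact fun x => (main x).differentiableAt
  · intro x
    have hgr : HasGradientAt Lτ ((σ ^ 2)⁻¹ • ((∫ y, g y • m (x - y)) - x)) x := by
      rw [hasGradientAt_iff_hasFDerivAt]
      have heq : (InnerProductSpace.toDual ℝ (EuclideanSpace ℝ (Fin n))
          ((σ ^ 2)⁻¹ • ((∫ y, g y • m (x - y)) - x)) : EuclideanSpace ℝ (Fin n) →L[ℝ] ℝ)
          = innerSL ℝ ((σ ^ 2)⁻¹ • ((∫ y, g y • m (x - y)) - x)) := by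
        ext v
        simp [InnerProductSpace.toDual_apply_apply, innerSL_apply_apply]
      rw [heq]
      exact main x
    exact hgr.gradient
end
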